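/- Let (g,[·,·],φ) be a regular Hom-Lie algebra. Then g ⊕ g* with bracket [x+ξ, y+η]_s = [x,y] + ad⋆_x η − ad⋆_y ξ and structure map φ ⊕ (φ⁻¹)* is a Hom-Lie algebra (the semidirect product via the coadjoint representation). -/

import Mathlib

open LinearMap Module

/-- A (regular, i.e. multiplicative with invertible structure map) Hom-Lie algebra. -/
structure HomLieAlgebra (K g : Type*) [Field K] [AddCommGroup g] [Module K g] where
  bracket : g →ₗ[K] g →ₗ[K] g
  phi : g ≃ₗ[K] g
  skew : ∀ x y, bracket x y = - bracket y x
  phi_bracket : ∀ x y, phi (bracket x y) = bracket (phi x) (phi y)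
  jacobi : ∀ x y z,
    bracket (phi x) (bracket y z) + bracket (phi y) (bracket z x)
      + bracket (phi z) (bracket x y) = 0

variable {K g V : Type*} [Field K] [AddCommGroup g] [Module K g]
  [AddCommGroup V] [Module K V]

/-- `ρ` is a representation of the Hom-Lie algebra `L` on `V` with respect to `β`. -/
def HomLieAlgebra.IsRep (L : HomLieAlgebra K g) (β : V ≃ₗ[K] V)
    (ρ : g →ₗ[K] V →ₗ[K] V) : Prop :=
  (∀ x u, ρ (L.phi x) (β u) = β (ρ x u)) ∧
  (∀ x y u, ρ (L.bracket x y) (β u) = ρ (L.phi x) (ρ y u) - ρ (L.phi y) (ρ x u))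

/-- The coadjoint representation: `ad⋆_x ξ = ad*_{φ(x)}((φ⁻²)*(ξ))`, i.e.
`⟨ad⋆_x ξ, y⟩ = −⟨ξ, φ⁻²([φ(x), y])⟩`. -/
def coadRep (L : HomLieAlgebra K g) (x : g) (ξ : Dual K g) : Dual K g :=
  - (ξ ∘ₗ L.phi.symm.toLinearMap ∘ₗ L.phi.symm.toLinearMap ∘ₗ L.bracket (L.phi x))


lemma psi_bracket (L : HomLieAlgebra K g) (x y : g) :
    L.phi.symm (L.bracket x y) = L.bracket (L.phi.symm x) (L.phi.symm y) := by
  apply L.phi.injective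
  simp [L.phi_bracket]

lemma coad_apply (L : HomLieAlgebra K g) (x : g) (ξ : Dual K g) (y : g) :
    coadRep L x ξ y = - ξ (L.phi.symm (L.phi.symm (L.bracket (L.phi x) y))) := by
  simp [coadRep]

lemma coad_sub (L : HomLieAlgebra K g) (x : g) (ξ η : Dual K g) :
    coadRep L x (ξ - η) = coadRep L x ξ - coadRep L x η := by
  ext w; simp [coad_apply]; ring

-- multiplicativity lemma
lemma coad_phi (L : HomLieAlgebra K g) (x : g) (ξ : Dual K g) :
    coadRep L (L.phi x) (ξ ∘ₗ L.phi.symm.toLinearMap)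
      = (coadRep L x ξ) ∘ₗ L.phi.symm.toLinearMap := by
  ext w
  simp only [coad_apply, coe_comp, Function.comp_apply, LinearEquiv.coe_coe, neg_inj]
  congr 1
  apply L.phi.injective
  simp only [LinearEquiv.apply_symm_apply]
  rw [psi_bracket]
  congr 1
  apply L.phi.injective
  simp [L.phi_bracket]

-- rep lemma
lemma coad_bracket (L : HomLieAlgebra K g) (x y : g) (ξ : Dual K g) :
    coadRep L (L.bracket x y) (ξ ∘ₗ L.phi.symm.toLinearMap)
      = coadRep L (L.phi x) (coadRep L y ξ) - coadRep L (L.phi y) (coadRep L x ξ) := by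
  ext w
  simp only [coad_apply, LinearMap.sub_apply, coe_comp, Function.comp_apply, LinearEquiv.coe_coe,
    map_neg, neg_neg, neg_sub]
  rw [← map_sub ξ, ← map_neg ξ]
  congr 1
  apply L.phi.injective; apply L.phi.injective; apply L.phi.injective
  simp only [map_sub, map_neg, LinearEquiv.apply_symm_apply, L.phi_bracket]
  obtain ⟨v, rfl⟩ : ∃ v, w = L.phi v := ⟨L.phi.symm w, (L.phi.apply_symm_apply w).symm⟩
  rw [psi_bracket, psi_bracket]
  simp only [LinearEquiv.symm_apply_apply]
  have J := L.jacobi (L.phi x) (L.phi y) v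
  rw [L.skew v (L.phi x), map_neg] at J
  rw [L.skew (L.bracket (L.phi x) (L.phi y)) (L.phi v), neg_neg]
  rw [← sub_eq_zero, ← J]
  abel


/-- The semidirect product bracket `[x+ξ, y+η]_s = [x,y] + ad⋆_x η − ad⋆_y ξ` on `g ⊕ g*`. -/
def sdBracket (L : HomLieAlgebra K g) (p q : g × Dual K g) : g × Dual K g :=
  (L.bracket p.1 q.1, coadRep L p.1 q.2 - coadRep L q.1 p.2)

/-- The structure map `φ ⊕ (φ⁻¹)*` on `g ⊕ g*`. -/
def sdPhi (L : HomLieAlgebra K g) (p : g × Dual K g) : g × Dual K g :=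
  (L.phi p.1, p.2 ∘ₗ L.phi.symm.toLinearMap)

/-- `(g ⊕ g*, [·,·]_s, φ ⊕ (φ⁻¹)*)` is a Hom-Lie algebra. -/
theorem sd_homLie (L : HomLieAlgebra K g) :
    (∀ p q : g × Dual K g, sdBracket L p q = - sdBracket L q p) ∧
    (∀ p q : g × Dual K g, sdPhi L (sdBracket L p q) = sdBracket L (sdPhi L p) (sdPhi L q)) ∧
    (∀ p q r : g × Dual K g,
      sdBracket L (sdPhi L p) (sdBracket L q r)
        + sdBracket L (sdPhi L q) (sdBracket L r p)
        + sdBracket L (sdPhi L r) (sdBracket L p q) = 0) := by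
  refine ⟨?_, ?_, ?_⟩
  · intro p q
    simp only [sdBracket, Prod.neg_mk, Prod.mk.injEq]
    exact ⟨L.skew _ _, (neg_sub _ _).symm⟩
  · intro p q
    simp only [sdBracket, sdPhi, Prod.mk.injEq]
    refine ⟨L.phi_bracket _ _, ?_⟩
    rw [coad_phi, coad_phi]
    ext w
    simp
  · intro p q r
    simp only [sdBracket, sdPhi, Prod.mk_add_mk, Prod.mk_eq_zero]
    constructor
    · exact L.jacobi _ _ _
    · simp only [coad_sub, coad_bracket]
      abel
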